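/- Let L : ℝ^d → ℝ be c_s-strongly convex with minimum L_*, differentiable with L_g-Lipschitz gradient, and suppose the stochastic gradient over a batch of size b_t has mean ∇L(θ_t) and variance at most (M + M_v‖∇L(θ_t)‖²)/b_t. If 0 < η₀ ≤ 1/(L_g(M_v + B_max)) and 1 ≤ b_t ≤ B_max, then one SGD step θ_{t+1} = θ_t - b_t η₀ g_t satisfies E[L(θ_{t+1})] - L_* ≤ (1 - b_t η₀ c_s)(L(θ_t) - L_*) + (1/2) b_t η₀² L_g M. -/

import Mathlib

open MeasureTheory
open scoped RealInnerProductSpace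

lemma my_descent {d : ℕ} (L : EuclideanSpace ℝ (Fin d) → ℝ) (Lg : ℝ)
    (hdiff : ContDiff ℝ 1 L)
    (hLip : ∀ x y, ‖gradient L x - gradient L y‖ ≤ Lg * ‖x - y‖)
    (x v : EuclideanSpace ℝ (Fin d)) :
    L (x + v) ≤ L x + ⟪gradient L x, v⟫ + Lg / 2 * ‖v‖ ^ 2 := by
  have hd : Differentiable ℝ L := hdiff.differentiable one_ne_zero
  set ψ : ℝ → ℝ := fun t => L (x + t • v) - t * ⟪gradient L x, v⟫ - Lg / 2 * t ^ 2 * ‖v‖ ^ 2 with hψ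
  have hline : ∀ t : ℝ, HasDerivAt (fun t : ℝ => x + t • v) v t := by
    intro t
    simpa using ((hasDerivAt_id t).smul_const v).const_add x
  have hLder : ∀ t : ℝ, HasDerivAt (fun t : ℝ => L (x + t • v))
      ⟪gradient L (x + t • v), v⟫ t := by
    intro t
    have h1 : HasFDerivAt L (InnerProductSpace.toDual ℝ _ (gradient L (x + t • v))) (x + t • v) :=
      (hd (x + t • v)).hasGradientAt.hasFDerivAt
    have := h1.comp_hasDerivAt t (hline t)
    rw [InnerProductSpace.toDual_apply_apply] at this
    exact this
  have hψder : ∀ t : ℝ, HasDerivAt ψ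
      (⟪gradient L (x + t • v), v⟫ - ⟪gradient L x, v⟫ - Lg * t * ‖v‖ ^ 2) t := by
    intro t
    have h2 : HasDerivAt (fun t : ℝ => t * ⟪gradient L x, v⟫) ⟪gradient L x, v⟫ t := by
      simpa using (hasDerivAt_id t).mul_const ⟪gradient L x, v⟫
    have h3 : HasDerivAt (fun t : ℝ => Lg / 2 * t ^ 2 * ‖v‖ ^ 2) (Lg * t * ‖v‖ ^ 2) t := by
      have := ((hasDerivAt_pow 2 t).const_mul (Lg / 2)).mul_const (‖v‖ ^ 2)
      rw [show Lg / 2 * ((2:ℕ) * t ^ (2 - 1)) * ‖v‖ ^ 2 = Lg * t * ‖v‖ ^ 2 by push_cast; ring] at this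
      exact this
    exact ((hLder t).sub h2).sub h3
  have hψdiff : Differentiable ℝ ψ := fun t => (hψder t).differentiableAt
  have hmono : AntitoneOn ψ (Set.Icc 0 1) := by
    apply antitoneOn_of_deriv_nonpos (convex_Icc 0 1) (hψdiff.continuous.continuousOn)
      (hψdiff.differentiableOn)
    intro t ht
    rw [interior_Icc] at ht
    rw [(hψder t).deriv]
    have h4 : ⟪gradient L (x + t • v) - gradient L x, v⟫ ≤ Lg * t * ‖v‖ ^ 2 := by
      calc ⟪gradient L (x + t • v) - gradient L x, v⟫
          ≤ ‖gradient L (x + t • v) - gradient L x‖ * ‖v‖ := real_inner_le_norm _ _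
        _ ≤ (Lg * ‖(x + t • v) - x‖) * ‖v‖ := by
            gcongr; exact hLip _ _
        _ = Lg * t * ‖v‖ ^ 2 := by
            rw [show (x + t • v) - x = t • v by abel, norm_smul]
            simp [abs_of_pos ht.1]; ring
    rw [inner_sub_left] at h4
    linarith
  have := hmono (Set.left_mem_Icc.2 zero_le_one) (Set.right_mem_Icc.2 zero_le_one) zero_le_one
  simp only [hψ, one_smul, zero_smul, add_zero, one_pow, mul_one, zero_mul, mul_zero,
    sub_zero, zero_pow, OfNat.ofNat_ne_zero, ne_eq, not_false_iff] at this
  linarith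

set_option maxHeartbeats 1000000 in
theorem abs_one_step_bound {d : ℕ} {Ω : Type*} [MeasurableSpace Ω]
    (μ : Measure Ω) [IsProbabilityMeasure μ]
    (L : EuclideanSpace ℝ (Fin d) → ℝ) (cs Lg M Mv η0 bt Bmax Lstar : ℝ)
    (θstar θt : EuclideanSpace ℝ (Fin d)) (g : Ω → EuclideanSpace ℝ (Fin d))
    (hdiff : ContDiff ℝ 1 L) (hcs : 0 < cs)
    (hconv : ∀ θ1 θ2, L θ1 + ⟪gradient L θ1, θ2 - θ1⟫ + cs / 2 * ‖θ2 - θ1‖ ^ 2 ≤ L θ2)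
    (hmin : L θstar = Lstar) (hglob : ∀ θ, Lstar ≤ L θ)
    (hLg : 0 < Lg)
    (hLip : ∀ x y, ‖gradient L x - gradient L y‖ ≤ Lg * ‖x - y‖)
    (hM : 0 ≤ M) (hMv : 0 ≤ Mv)
    (hη : 0 < η0) (hη2 : η0 ≤ 1 / (Lg * (Mv + Bmax)))
    (hbt : 1 ≤ bt) (hbB : bt ≤ Bmax)
    (hint : Integrable g μ) (hint2 : Integrable (fun ω => ‖g ω‖ ^ 2) μ)
    (hintL : Integrable (fun ω => L (θt - (bt * η0) • g ω)) μ)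
    (hmean : ∫ ω, g ω ∂μ = gradient L θt)
    (hvar : ∫ ω, ‖g ω - gradient L θt‖ ^ 2 ∂μ ≤ (M + Mv * ‖gradient L θt‖ ^ 2) / bt) :
    (∫ ω, L (θt - (bt * η0) • g ω) ∂μ) - Lstar ≤
      (1 - bt * η0 * cs) * (L θt - Lstar) + 1/2 * bt * η0 ^ 2 * Lg * M := by
  set G := gradient L θt with hG
  set η := bt * η0 with hηdef
  have hbt0 : (0:ℝ) < bt := lt_of_lt_of_le one_pos hbt
  have hη0 : 0 < η := mul_pos hbt0 hη
  set S := ‖G‖ ^ 2 with hS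
  have hS0 : 0 ≤ S := sq_nonneg _
  have hD0 : 0 ≤ L θt - Lstar := by linarith [hglob θt]
  -- key step size bound
  have hkey : Lg * η0 * (Mv + bt) ≤ 1 := by
    have hpos : 0 < Lg * (Mv + Bmax) := by nlinarith
    have h : η0 * (Lg * (Mv + Bmax)) ≤ 1 := by
      rw [← le_div_iff₀ hpos]; simpa [div_eq_mul_inv] using hη2
    nlinarith
  -- PL inequality
  have hPL : 2 * cs * (L θt - Lstar) ≤ S := by
    have h := hconv θt θstar
    rw [hmin] at h
    set u := θstar - θt with hu
    have hexp : cs ^ 2 * ‖u + (1 / cs) • G‖ ^ 2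
        = cs ^ 2 * ‖u‖ ^ 2 + 2 * cs * ⟪G, u⟫ + S := by
      rw [norm_add_sq_real, real_inner_smul_right, real_inner_comm u G, norm_smul,
        Real.norm_eq_abs, abs_of_pos (by positivity : (0:ℝ) < 1 / cs), mul_pow, hS]
      field_simp
    have hnn : 0 ≤ cs ^ 2 * ‖u + (1 / cs) • G‖ ^ 2 := by positivity
    rw [hexp] at hnn
    nlinarith [mul_le_mul_of_nonneg_left h (by positivity : (0:ℝ) ≤ 2 * cs)]
  -- pointwise descent
  have hpt : ∀ ω, L (θt - η • g ω) ≤ L θt - η * ⟪G, g ω⟫ + Lg / 2 * (η ^ 2 * ‖g ω‖ ^ 2) := by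
    intro ω
    have h := my_descent L Lg hdiff hLip θt (-(η • g ω))
    rw [← sub_eq_add_neg] at h
    have h1 : ⟪G, -(η • g ω)⟫ = -(η * ⟪G, g ω⟫) := by
      rw [inner_neg_right, real_inner_smul_right]
    have h2 : ‖-(η • g ω)‖ ^ 2 = η ^ 2 * ‖g ω‖ ^ 2 := by
      rw [norm_neg, norm_smul, Real.norm_eq_abs, abs_of_pos hη0, mul_pow]
    rw [h1, h2] at h
    linarith
  -- integrability
  have hinner_int : Integrable (fun ω => ⟪G, g ω⟫) μ := by
    have := (innerSL ℝ G).integrable_comp hint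
    simpa using this
  have hRHSint : Integrable
      (fun ω => L θt - η * ⟪G, g ω⟫ + Lg / 2 * (η ^ 2 * ‖g ω‖ ^ 2)) μ :=
    ((integrable_const _).sub (hinner_int.const_mul η)).add
      ((hint2.const_mul (η ^ 2)).const_mul (Lg / 2))
  set I2 := ∫ ω, ‖g ω‖ ^ 2 ∂μ with hI2def
  have e5 : (∫ ω, ⟪G, g ω⟫ ∂μ) = S := by
    rw [integral_inner hint, hmean, real_inner_self_eq_norm_sq]
  have hIneq1 : (∫ ω, L (θt - η • g ω) ∂μ)
      ≤ L θt - η * S + Lg / 2 * (η ^ 2 * I2) := by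
    have h := integral_mono hintL hRHSint hpt
    have e1 : (∫ ω, (L θt - η * ⟪G, g ω⟫ + Lg / 2 * (η ^ 2 * ‖g ω‖ ^ 2)) ∂μ)
        = (∫ ω, (L θt - η * ⟪G, g ω⟫) ∂μ) + ∫ ω, Lg / 2 * (η ^ 2 * ‖g ω‖ ^ 2) ∂μ :=
      integral_add ((integrable_const _).sub (hinner_int.const_mul η))
        ((hint2.const_mul (η ^ 2)).const_mul (Lg / 2))
    have e2 : (∫ ω, (L θt - η * ⟪G, g ω⟫) ∂μ)
        = (∫ _ω, L θt ∂μ) - ∫ ω, η * ⟪G, g ω⟫ ∂μ :=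
      integral_sub (integrable_const _) (hinner_int.const_mul η)
    have e3 : (∫ ω, η * ⟪G, g ω⟫ ∂μ) = η * ∫ ω, ⟪G, g ω⟫ ∂μ := integral_const_mul _ _
    have e4 : (∫ ω, Lg / 2 * (η ^ 2 * ‖g ω‖ ^ 2) ∂μ) = Lg / 2 * (η ^ 2 * I2) := by
      rw [integral_const_mul, integral_const_mul]
    rw [e1, e2, e3, e4, e5, integral_const] at h
    simpa using h
  -- variance identity
  have hvareq : (∫ ω, ‖g ω - G‖ ^ 2 ∂μ) = I2 - S := by
    have hpw : ∀ ω, ‖g ω - G‖ ^ 2 = ‖g ω‖ ^ 2 - 2 * ⟪G, g ω⟫ + S := by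
      intro ω
      rw [norm_sub_sq_real, real_inner_comm (g ω) G]
    have e1 : (∫ ω, ‖g ω - G‖ ^ 2 ∂μ)
        = ∫ ω, (‖g ω‖ ^ 2 - 2 * ⟪G, g ω⟫ + S) ∂μ :=
      integral_congr_ae (Filter.Eventually.of_forall hpw)
    have e2 : (∫ ω, (‖g ω‖ ^ 2 - 2 * ⟪G, g ω⟫ + S) ∂μ)
        = (∫ ω, (‖g ω‖ ^ 2 - 2 * ⟪G, g ω⟫) ∂μ) + ∫ _ω, S ∂μ :=
      integral_add (hint2.sub (hinner_int.const_mul 2)) (integrable_const _)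
    have e3 : (∫ ω, (‖g ω‖ ^ 2 - 2 * ⟪G, g ω⟫) ∂μ)
        = I2 - ∫ ω, 2 * ⟪G, g ω⟫ ∂μ := integral_sub hint2 (hinner_int.const_mul 2)
    have e4 : (∫ ω, 2 * ⟪G, g ω⟫ ∂μ) = 2 * ∫ ω, ⟪G, g ω⟫ ∂μ := integral_const_mul _ _
    rw [e1, e2, e3, e4, e5, integral_const]
    simp
    ring
  have hI2bound : bt * I2 ≤ M + Mv * S + bt * S := by
    rw [hvareq] at hvar
    have h := (le_div_iff₀ hbt0).mp hvar
    nlinarith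
  -- combine
  have hc1 : Lg / 2 * η0 ^ 2 * bt * (bt * I2) ≤ Lg / 2 * η0 ^ 2 * bt * (M + Mv * S + bt * S) :=
    mul_le_mul_of_nonneg_left hI2bound (by positivity)
  have hc2 : bt * η0 * S / 2 * (Lg * η0 * (Mv + bt)) ≤ bt * η0 * S / 2 * 1 :=
    mul_le_mul_of_nonneg_left hkey (by positivity)
  have hc3 : bt * η0 / 2 * (2 * cs * (L θt - Lstar)) ≤ bt * η0 / 2 * S :=
    mul_le_mul_of_nonneg_left hPL (by positivity)
  rw [hηdef] at hIneq1
  nlinarith [hIneq1, hc1, hc2, hc3]
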